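/- Let (s_1,…,s_N) be a Cuntz family of order N on a complex Hilbert space H, let J be an infinite word with letters in {1,…,N}, and let Ω ∈ H be a UHF-cyclic unit vector satisfying the P[J]-condition. Then every bounded operator on H commuting with all operators s_K s_L^* (K, L finite words with |K| = |L|) is a scalar multiple of the identity; that is, the representation P[J] is irreducible. -/

import Mathlib

noncomputable section

def IsCuntzFamily {H : Type*} [NormedAddCommGroup H] [InnerProductSpace ℂ H]
    [CompleteSpace H] {N : ℕ} (s : Fin N → H →L[ℂ] H) : Prop :=
  (∀ i j, star (s i) * s j = if i = j then (1 : H →L[ℂ] H) else 0) ∧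
  ∑ i, s i * star (s i) = 1

def wordOp {H : Type*} [NormedAddCommGroup H] [InnerProductSpace ℂ H]
    [CompleteSpace H] {N : ℕ} (s : Fin N → H →L[ℂ] H) : List (Fin N) → H →L[ℂ] H
  | [] => 1
  | j :: J => s j * wordOp s J


/-- Closed linear span of `{s_K s_L^* v : |K| = |L|}`. -/
def UHFSpan {H : Type*} [NormedAddCommGroup H] [InnerProductSpace ℂ H]
    [CompleteSpace H] {N : ℕ} (s : Fin N → H →L[ℂ] H) (v : H) : Submodule ℂ H :=
  (Submodule.span ℂ {x : H | ∃ K L : List (Fin N), K.length = L.length ∧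
      x = (wordOp s K * star (wordOp s L)) v}).topologicalClosure

/-- `Ω` is UHF-cyclic: the closed span of `{s_K s_L^* Ω : |K| = |L|}` is the whole space. -/
def IsUHFCyclic {H : Type*} [NormedAddCommGroup H] [InnerProductSpace ℂ H]
    [CompleteSpace H] {N : ℕ} (s : Fin N → H →L[ℂ] H) (Ω : H) : Prop :=
  UHFSpan s Ω = ⊤

/-- The `P[w]`-condition for an infinite word `w` (0-indexed). -/
def PCond {H : Type*} [NormedAddCommGroup H] [InnerProductSpace ℂ H]
    [CompleteSpace H] {N : ℕ} (s : Fin N → H →L[ℂ] H) (w : ℕ → Fin N) (Ω : H) : Prop :=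
  ∀ n : ℕ, (wordOp s (List.ofFn fun k : Fin n => w k) *
      star (wordOp s (List.ofFn fun k : Fin n => w k))) Ω = Ω


section Aux

variable {H : Type*} [NormedAddCommGroup H] [InnerProductSpace ℂ H] [CompleteSpace H]
  {N : ℕ} (s : Fin N → H →L[ℂ] H)

local notation "⟪" x ", " y "⟫" => @inner ℂ _ _ x y

lemma wordOp_orth (hs : IsCuntzFamily s) :
    ∀ K L : List (Fin N), K.length = L.length →
      star (wordOp s K) * wordOp s L = if K = L then 1 else 0 := by
  intro K
  induction K with
  | nil =>
    intro L h
    cases L with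
    | nil => simp [wordOp]
    | cons b L' => simp at h
  | cons a K ih =>
    intro L h
    cases L with
    | nil => simp at h
    | cons b L' =>
      have h' : K.length = L'.length := by simpa using h
      have key : star (wordOp s (a :: K)) * wordOp s (b :: L')
          = star (wordOp s K) * ((star (s a) * s b) * wordOp s L') := by
        simp only [wordOp, star_mul]
        simp [mul_assoc]
      rw [key, hs.1 a b]
      by_cases hab : a = b
      · subst hab
        rw [if_pos rfl, one_mul, ih L' h']
        by_cases hKL : K = L' <;> simp [hKL]
      · rw [if_neg hab, zero_mul, mul_zero, if_neg (by simp [hab])]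

lemma star_wordOp_apply (hs : IsCuntzFamily s) (J : ℕ → Fin N) (v : H)
    (hv : ∀ n : ℕ, (wordOp s (List.ofFn fun k : Fin n => J k) *
        star (wordOp s (List.ofFn fun k : Fin n => J k))) v = v)
    (L : List (Fin N)) :
    star (wordOp s L) v =
      if L = List.ofFn (fun k : Fin L.length => J k) then
        star (wordOp s (List.ofFn fun k : Fin L.length => J k)) v else 0 := by
  set Jm := List.ofFn fun k : Fin L.length => J k with hJm
  have hlen : L.length = Jm.length := by simp [hJm]
  have h1 := hv L.length
  calc star (wordOp s L) v
      = star (wordOp s L) ((wordOp s Jm * star (wordOp s Jm)) v) := by rw [h1]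
    _ = ((star (wordOp s L) * wordOp s Jm) * star (wordOp s Jm)) v := by
        simp [ContinuousLinearMap.mul_apply]
    _ = _ := by
        rw [wordOp_orth s hs L Jm hlen]
        by_cases h : L = Jm <;> simp [h]

lemma inner_word_eq (hs : IsCuntzFamily s) (J : ℕ → Fin N) (Ω v : H)
    (hΩP : ∀ n : ℕ, (wordOp s (List.ofFn fun k : Fin n => J k) *
        star (wordOp s (List.ofFn fun k : Fin n => J k))) Ω = Ω)
    (hv : ∀ n : ℕ, (wordOp s (List.ofFn fun k : Fin n => J k) *
        star (wordOp s (List.ofFn fun k : Fin n => J k))) v = v)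
    (K L : List (Fin N)) (hKL : K.length = L.length) :
    ⟪(wordOp s K * star (wordOp s L)) Ω, v⟫ =
      if K = List.ofFn (fun k : Fin L.length => J k) ∧
         L = List.ofFn (fun k : Fin L.length => J k) then ⟪Ω, v⟫ else 0 := by
  set Jm := List.ofFn fun k : Fin L.length => J k with hJm
  have hadj : ∀ (A : H →L[ℂ] H) (x y : H), ⟪A x, y⟫ = ⟪x, star A y⟫ := by
    intro A x y
    rw [ContinuousLinearMap.star_eq_adjoint, ContinuousLinearMap.adjoint_inner_right]
  have h1 : ⟪(wordOp s K * star (wordOp s L)) Ω, v⟫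
      = ⟪star (wordOp s L) Ω, star (wordOp s K) v⟫ := by
    rw [ContinuousLinearMap.mul_apply, hadj]
  rw [h1, star_wordOp_apply s hs J Ω hΩP L, star_wordOp_apply s hs J v hv K]
  have hK : List.ofFn (fun k : Fin K.length => J k) = Jm := by
    rw [hJm, hKL]
  rw [hK]
  by_cases hLp : L = Jm
  · by_cases hKp : K = Jm
    · rw [if_pos hLp, if_pos hKp, if_pos ⟨hKp, hLp⟩]
      rw [← hadj (wordOp s Jm)]
      have := hΩP L.length
      rw [← hJm] at this
      rw [← ContinuousLinearMap.mul_apply, this]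
    · rw [if_neg hKp, inner_zero_right, if_neg (fun h => hKp h.1)]
  · rw [if_neg hLp, inner_zero_left, if_neg (fun h => hLp h.2)]

end Aux

theorem PJ_irreducible
    {H : Type*} [NormedAddCommGroup H] [InnerProductSpace ℂ H] [CompleteSpace H]
    {N : ℕ} (s : Fin N → H →L[ℂ] H) (hs : IsCuntzFamily s)
    (J : ℕ → Fin N) (Ω : H) (hΩ : ‖Ω‖ = 1)
    (hcyc : IsUHFCyclic s Ω) (hP : PCond s J Ω) :
    ∀ T : H →L[ℂ] H,
      (∀ K L : List (Fin N), K.length = L.length →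
        T * (wordOp s K * star (wordOp s L)) = (wordOp s K * star (wordOp s L)) * T) →
      ∃ c : ℂ, T = c • (1 : H →L[ℂ] H) := by
  intro T hT
  set S : Set H := {x : H | ∃ K L : List (Fin N), K.length = L.length ∧
      x = (wordOp s K * star (wordOp s L)) Ω} with hS
  -- T Ω also satisfies the P-condition
  have hPT : ∀ n : ℕ, (wordOp s (List.ofFn fun k : Fin n => J k) *
      star (wordOp s (List.ofFn fun k : Fin n => J k))) (T Ω) = T Ω := by
    intro n
    set Jn := List.ofFn fun k : Fin n => J k with hJn
    have hc := hT Jn Jn rfl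
    have h2 : (wordOp s Jn * star (wordOp s Jn)) (T Ω)
        = T ((wordOp s Jn * star (wordOp s Jn)) Ω) := by
      have := congrArg (fun A : H →L[ℂ] H => A Ω) hc
      simpa [ContinuousLinearMap.mul_apply] using this.symm
    rw [h2, hP n]
  set c : ℂ := @inner ℂ _ _ Ω (T Ω) with hc
  -- Step 1: T Ω = c • Ω
  have hTΩ : T Ω = c • Ω := by
    set w : H := T Ω - c • Ω with hw
    have horth : ∀ x ∈ S, @inner ℂ _ _ w x = 0 := by
      intro x hx
      obtain ⟨K, L, hKL, rfl⟩ := hx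
      have hΩΩ : @inner ℂ _ _ Ω Ω = (1 : ℂ) := by
        rw [@inner_self_eq_norm_sq_to_K ℂ, hΩ]; norm_num
      have e1 := inner_word_eq s hs J Ω (T Ω) hP hPT K L hKL
      have e2 := inner_word_eq s hs J Ω Ω hP hP K L hKL
      have : @inner ℂ _ _ ((wordOp s K * star (wordOp s L)) Ω) w = 0 := by
        rw [hw, inner_sub_right, inner_smul_right, e1, e2, hΩΩ]
        by_cases h : K = List.ofFn (fun k : Fin L.length => J k) ∧
            L = List.ofFn (fun k : Fin L.length => J k)
        · simp only [if_pos h]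
          rw [mul_one, hc, sub_self]
        · simp only [if_neg h]
          rw [mul_zero, sub_self]
      rw [← inner_conj_symm, this, map_zero]
    have hcyc' : (Submodule.span ℂ S).topologicalClosure = (⊤ : Submodule ℂ H) := hcyc
    -- density argument via the kernel of the continuous functional ⟪w, ·⟫
    have hker : Submodule.span ℂ S ≤ (innerSL ℂ w).ker := by
      rw [Submodule.span_le]
      intro x hx
      exact horth x hx
    have htop : (⊤ : Submodule ℂ H) ≤ (innerSL ℂ w).ker := by
      rw [← hcyc']
      exact Submodule.topologicalClosure_minimal _ hker
        (ContinuousLinearMap.isClosed_ker (innerSL ℂ w))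
    have hww : @inner ℂ _ _ w w = 0 := htop (Submodule.mem_top : w ∈ (⊤ : Submodule ℂ H))
    have hw0 : w = 0 := inner_self_eq_zero.mp hww
    rw [hw] at hw0
    exact sub_eq_zero.mp hw0
  -- Step 2: T = c • 1
  refine ⟨c, ?_⟩
  have hcyc' : (Submodule.span ℂ S).topologicalClosure = (⊤ : Submodule ℂ H) := hcyc
  have hker2 : Submodule.span ℂ S ≤ (T - c • (1 : H →L[ℂ] H)).ker := by
    rw [Submodule.span_le]
    rintro x ⟨K, L, hKL, rfl⟩
    have hcomm := hT K L hKL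
    have h3 : T ((wordOp s K * star (wordOp s L)) Ω)
        = (wordOp s K * star (wordOp s L)) (T Ω) := by
      have := congrArg (fun A : H →L[ℂ] H => A Ω) hcomm
      simpa [ContinuousLinearMap.mul_apply] using this
    simp only [SetLike.mem_coe, LinearMap.mem_ker, ContinuousLinearMap.coe_coe, ContinuousLinearMap.sub_apply,
      ContinuousLinearMap.smul_apply, ContinuousLinearMap.one_apply]
    rw [h3, hTΩ, map_smul, sub_self]
  have htop2 : (⊤ : Submodule ℂ H) ≤ (T - c • (1 : H →L[ℂ] H)).ker := by
    rw [← hcyc']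
    exact Submodule.topologicalClosure_minimal _ hker2
      (ContinuousLinearMap.isClosed_ker (T - c • (1 : H →L[ℂ] H)))
  ext x
  have hx : x ∈ (T - c • (1 : H →L[ℂ] H)).ker :=
    htop2 (Submodule.mem_top : x ∈ (⊤ : Submodule ℂ H))
  have h4 := LinearMap.mem_ker.mp hx
  simp only [ContinuousLinearMap.coe_coe, ContinuousLinearMap.sub_apply, ContinuousLinearMap.smul_apply,
    ContinuousLinearMap.one_apply, sub_eq_zero] at h4
  simpa using h4
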